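/- Let M be a rank m holomorphic vector bundle over ℙ¹ trivialized over the standard charts U₀, U₁ (with coordinate μ on U₁), with frames s₁,…,s_m over U₀ and t₁,…,t_m over U₁. Suppose the transition matrix expressing the s_i in terms of the t_j over U₀ ∩ U₁ is upper triangular with diagonal entries x_i·μ for nonzero constants x_i, and with strictly upper triangular entries lying in μ·ℂ[μ]. Then M ≅ O_{ℙ¹}(1)^{⊕ m}. -/

import Mathlib

open Matrix

/-- A rank `m` holomorphic vector bundle on `ℙ¹`, given by a
transition matrix `T(μ)` over `U₀ ∩ U₁ = ℂ^×` which is upper triangular with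
diagonal entries `x_i μ` (`x_i ≠ 0`) and strictly upper triangular entries in
`μ·ℂ[μ]`, is isomorphic to `O(1)^{⊕m}`.  At the level of cocycles: there are
matrices `A(μ)` (holomorphic and invertible for all `μ`, i.e. a change of frame
on `U₁`) and `B(λ)` (holomorphic and invertible for all `λ`, a change of frame
on `U₀`) with `T(μ) = A(μ) · (μ·𝟙) · B(μ⁻¹)` for all `μ ≠ 0`, where `μ·𝟙` is
the transition matrix of `O(1)^{⊕m}`. -/
theorem stmt17 (m : ℕ) (x : Fin m → ℂ) (hx : ∀ i, x i ≠ 0)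
    (g : Fin m → Fin m → Polynomial ℂ)
    (hg : ∀ i j, (g i j).coeff 0 = 0)
    (T : ℂ → Matrix (Fin m) (Fin m) ℂ)
    (hT : ∀ (μ : ℂ) (i j : Fin m),
      T μ i j = if i = j then x i * μ
        else if i < j then (g i j).eval μ else 0) :
    ∃ A B : ℂ → Matrix (Fin m) (Fin m) ℂ,
      (∀ i j : Fin m, Differentiable ℂ (fun z => A z i j)) ∧
      (∀ i j : Fin m, Differentiable ℂ (fun z => B z i j)) ∧
      (∀ z : ℂ, IsUnit (A z)) ∧ (∀ z : ℂ, IsUnit (B z)) ∧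
      (∀ μ : ℂ, μ ≠ 0 →
        T μ = A μ * (μ • (1 : Matrix (Fin m) (Fin m) ℂ)) * B μ⁻¹) := by
  refine ⟨fun z => Matrix.of fun i j => if i = j then x i else if i < j then ((g i j).divX).eval z else 0,
    fun _ => 1, ?_, ?_, ?_, ?_, ?_⟩
  · intro i j
    by_cases h : i = j
    · simp [h]
    · by_cases h' : i < j
      · simpa [h, h'] using (Polynomial.differentiable ((g i j).divX))
      · simp [h, h']
  · intro i j
    by_cases h : i = j <;> simp [h]
  · intro z
    have hbt : BlockTriangular
        (Matrix.of fun i j => if i = j then x i else if i < j then ((g i j).divX).eval z else 0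
          : Matrix (Fin m) (Fin m) ℂ) id := by
      intro i j hij
      simp only [id] at hij
      have h1 : ¬ i = j := fun h => absurd h (by omega)
      have h2 : ¬ i < j := by omega
      simp [h1, h2]
    beta_reduce
    rw [isUnit_iff_isUnit_det, Matrix.det_of_upperTriangular hbt]
    simp only [Matrix.of_apply, if_pos rfl]
    exact (isUnit_iff_ne_zero).2 (Finset.prod_ne_zero_iff.2 fun i _ => hx i)
  · intro z; simp
  · intro μ hμ
    ext i j
    have key : (g i j).eval μ = μ * ((g i j).divX).eval μ := by
      conv_lhs => rw [← Polynomial.X_mul_divX_add (g i j)]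
      simp [hg i j]
    simp only [Matrix.mul_one, Matrix.mul_smul, Matrix.mul_one, hT,
      Matrix.smul_apply, smul_eq_mul]
    by_cases h : i = j
    · simp [h, mul_comm]
    · by_cases h' : i < j
      · simp [h, h', key, mul_comm]
      · simp [h, h']
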